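/- arXiv:1612.09567 — 5 statements merged into one kernel-verified Lean document; each statement's English description precedes it below -/
import Mathlib

section
/- Let X be a connected, Hausdorff, locally path-connected topological space, let Γ be a discrete group acting on X freely and properly discontinuously, let G be a compact Hausdorff group, and let φ : Γ → G be a group homomorphism. Let Γ act on X × G diagonally, acting on X as given and on G by left translation via φ, and let G act on the quotient E := Γ\(X × G) by right translation in the second coordinate. Then E with this G-action is a locally trivial principal G-bundle over Y := Γ\X. -/
/-- The relation on `X × G` identifying `(x, g)` with `(γ·x, φ(γ)g)` for `γ ∈ Γ`,
where `Γ` acts on `X` and on `G` by left translation via `φ : Γ → G`. -/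
def BundleRel (X : Type*) {Γ : Type*} [Group Γ] [MulAction Γ X] {G : Type*} [Group G]
    (φ : Γ →* G) : X × G → X × G → Prop :=
  fun a b => ∃ γ : Γ, (γ • a.1, φ γ * a.2) = b

/-- The total space `E = Γ\(X × G)`. -/
def BundleTotal (X : Type*) {Γ : Type*} [Group Γ] [MulAction Γ X] {G : Type*} [Group G]
    (φ : Γ →* G) : Type _ :=
  Quot (BundleRel X φ)

instance BundleTotal.instTopologicalSpace (X : Type*) {Γ : Type*} [Group Γ] [MulAction Γ X]
    {G : Type*} [Group G] [TopologicalSpace X] [TopologicalSpace G] (φ : Γ →* G) :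
    TopologicalSpace (BundleTotal X φ) :=
  inferInstanceAs (TopologicalSpace (Quot _))

/-- The right `G`-action on `E = Γ\(X × G)` by right translation in the second coordinate. -/
def BundleAct {X Γ G : Type*} [Group Γ] [MulAction Γ X] [Group G] (φ : Γ →* G)
    (e : BundleTotal X φ) (g : G) : BundleTotal X φ :=
  Quot.lift (fun p => Quot.mk _ (p.1, p.2 * g))
    (by rintro a b ⟨γ, rfl⟩; exact Quot.sound ⟨γ, by simp [mul_assoc]⟩) e

/-- The orbit space `Y = Γ\X`, with the quotient topology. -/
def GammaQuot (X : Type*) (Γ : Type*) [Group Γ] [MulAction Γ X] : Type _ :=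
  Quot (fun a b : X => ∃ γ : Γ, γ • a = b)

instance GammaQuot.instTopologicalSpace (X : Type*) (Γ : Type*) [Group Γ] [MulAction Γ X]
    [TopologicalSpace X] : TopologicalSpace (GammaQuot X Γ) :=
  inferInstanceAs (TopologicalSpace (Quot _))

/-- The bundle projection `E = Γ\(X × G) → Y = Γ\X`. -/
def BundleProj (X : Type*) {Γ G : Type*} [Group Γ] [MulAction Γ X] [Group G] (φ : Γ →* G) :
    BundleTotal X φ → GammaQuot X Γ :=
  Quot.lift (fun p => Quot.mk _ p.1) (by rintro a b ⟨γ, rfl⟩; exact Quot.sound ⟨γ, rfl⟩)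


section AuxLemmas

theorem isOpenMap_codRestrict' {A B : Type*} [TopologicalSpace A] [TopologicalSpace B]
    {f : A → B} {S : Set B} (hf : IsOpenMap f) (h : ∀ a, f a ∈ S) :
    IsOpenMap (Set.codRestrict f S h) := by
  intro W hW
  rw [isOpen_induced_iff]
  refine ⟨f '' W, hf W hW, ?_⟩
  ext ⟨b, hb⟩
  simp [Set.codRestrict, Subtype.ext_iff, eq_comm]

theorem isOpenMap_quot_mk_action {Γ : Type*} [Group Γ] {A : Type*} [TopologicalSpace A]
    (f : Γ → A → A) (hcont : ∀ γ, Continuous (f γ))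
    (hone : ∀ a, f 1 a = a) (hmul : ∀ γ δ a, f γ (f δ a) = f (γ * δ) a) :
    IsOpenMap (Quot.mk (fun a b : A => ∃ γ : Γ, f γ a = b)) := by
  have hequiv : Equivalence (fun a b : A => ∃ γ : Γ, f γ a = b) := by
    constructor
    · exact fun a => ⟨1, hone a⟩
    · rintro a b ⟨γ, rfl⟩
      exact ⟨γ⁻¹, by rw [hmul, inv_mul_cancel, hone]⟩
    · rintro a b c ⟨γ, rfl⟩ ⟨δ, rfl⟩
      exact ⟨δ * γ, (hmul δ γ a).symm⟩
  have hmk_eq : ∀ a b : A, Quot.mk (fun a b : A => ∃ γ : Γ, f γ a = b) a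
      = Quot.mk (fun a b : A => ∃ γ : Γ, f γ a = b) b ↔ ∃ γ : Γ, f γ a = b := by
    intro a b
    rw [Quot.eq, hequiv.eqvGen_iff]
  intro S hS
  have key : Quot.mk (fun a b : A => ∃ γ : Γ, f γ a = b) ⁻¹'
      (Quot.mk (fun a b : A => ∃ γ : Γ, f γ a = b) '' S) = ⋃ γ : Γ, f γ '' S := by
    ext x
    simp only [Set.mem_preimage, Set.mem_image, Set.mem_iUnion]
    constructor
    · rintro ⟨s, hs, h⟩
      obtain ⟨γ, hγ⟩ := (hmk_eq s x).1 h
      exact ⟨γ, s, hs, hγ⟩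
    · rintro ⟨γ, s, hs, h⟩
      exact ⟨s, hs, (hmk_eq s x).2 ⟨γ, h⟩⟩
  apply isQuotientMap_quot_mk.isOpen_preimage.mp
  rw [key]
  refine isOpen_iUnion fun γ => ?_
  rw [Set.image_eq_preimage_of_inverse
    (g := f γ⁻¹)
    (fun a => by rw [hmul, inv_mul_cancel, hone])
    (fun a => by rw [hmul, mul_inv_cancel, hone])]
  exact hS.preimage (hcont γ⁻¹)

theorem bundleRel_equivalence {X : Type*} {Γ : Type*} [Group Γ] [MulAction Γ X] {G : Type*}
    [Group G] (φ : Γ →* G) : Equivalence (BundleRel X φ) := by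
  constructor
  · exact fun a => ⟨1, by simp⟩
  · rintro a b ⟨γ, rfl⟩
    exact ⟨γ⁻¹, by simp [smul_smul]⟩
  · rintro a b c ⟨γ, rfl⟩ ⟨δ, rfl⟩
    exact ⟨δ * γ, by simp [mul_smul, mul_assoc]⟩

theorem bundle_mk_eq_iff {X : Type*} {Γ : Type*} [Group Γ] [MulAction Γ X] {G : Type*}
    [Group G] (φ : Γ →* G) {a b : X × G} :
    Quot.mk (BundleRel X φ) a = Quot.mk (BundleRel X φ) b ↔ BundleRel X φ a b := by
  rw [Quot.eq, (bundleRel_equivalence φ).eqvGen_iff]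

theorem gammaRel_equivalence {X : Type*} {Γ : Type*} [Group Γ] [MulAction Γ X] :
    Equivalence (fun a b : X => ∃ γ : Γ, γ • a = b) := by
  constructor
  · exact fun a => ⟨1, by simp⟩
  · rintro a b ⟨γ, rfl⟩; exact ⟨γ⁻¹, by simp⟩
  · rintro a b c ⟨γ, rfl⟩ ⟨δ, rfl⟩; exact ⟨δ * γ, by simp [mul_smul]⟩

theorem gamma_mk_eq_iff {X : Type*} {Γ : Type*} [Group Γ] [MulAction Γ X] {a b : X} :
    Quot.mk (fun a b : X => ∃ γ : Γ, γ • a = b) a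
      = Quot.mk (fun a b : X => ∃ γ : Γ, γ • a = b) b ↔ ∃ γ : Γ, γ • a = b := by
  rw [Quot.eq, gammaRel_equivalence.eqvGen_iff]

end AuxLemmas

/-- Let `X` be a connected, Hausdorff, locally path-connected space, let a
discrete group `Γ` act on `X` freely and properly discontinuously (by homeomorphisms), let
`G` be a compact Hausdorff topological group and `φ : Γ → G` a homomorphism. Let `Γ` act
diagonally on `X × G` (on `G` by left translation via `φ`), and let `G` act on the quotient
`E = Γ\(X × G)` by right translation in the second coordinate. Then `E` with this `G`-action
is a locally trivial principal `G`-bundle over `Y = Γ\X`: the `G`-action is continuous and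
free, the projection is continuous, and every point of `Y` has an open neighbourhood `U`
with a `G`-equivariant homeomorphism from its preimage in `E` onto `U × G` (with the right
translation action on the second factor). -/
theorem bundleTotal_is_locally_trivial_principal_bundle
    (X : Type*) [TopologicalSpace X] [ConnectedSpace X] [T2Space X] [LocallyPathConnectedSpace X]
    (Γ : Type*) [Group Γ] [MulAction Γ X]
    (hΓcont : ∀ γ : Γ, Continuous fun x : X => γ • x)
    (hΓfree : ∀ (γ : Γ) (x : X), γ • x = x → γ = 1)
    (hΓpd : ∀ x : X, ∃ U : Set X, IsOpen U ∧ x ∈ U ∧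
      ∀ γ : Γ, γ ≠ 1 → Disjoint ((fun y : X => γ • y) '' U) U)
    (G : Type*) [Group G] [TopologicalSpace G] [IsTopologicalGroup G] [CompactSpace G]
    [T2Space G] (φ : Γ →* G) :
    Continuous (fun p : BundleTotal X φ × G => BundleAct φ p.1 p.2) ∧
    (∀ (e : BundleTotal X φ) (g : G), BundleAct φ e g = e → g = 1) ∧
    Continuous (BundleProj X φ) ∧
    ∀ y : GammaQuot X Γ, ∃ U : Set (GammaQuot X Γ), IsOpen U ∧ y ∈ U ∧
      ∃ ψ : (BundleProj X φ ⁻¹' U : Set (BundleTotal X φ)) ≃ₜ U × G,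
        ∀ (a b : (BundleProj X φ ⁻¹' U : Set (BundleTotal X φ))) (g : G),
          (b : BundleTotal X φ) = BundleAct φ (a : BundleTotal X φ) g →
            ψ b = ((ψ a).1, (ψ a).2 * g) := by
  have hmkEopen : IsOpenMap (Quot.mk (BundleRel X φ)) := by
    exact isOpenMap_quot_mk_action (fun γ (p : X × G) => (γ • p.1, φ γ * p.2))
      (fun γ => ((hΓcont γ).comp continuous_fst).prodMk (continuous_const.mul continuous_snd))
      (fun a => by simp)
      (fun γ δ a => by simp [mul_smul, mul_assoc])
  refine ⟨?_, ?_, ?_, ?_⟩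
  · -- continuity of the action
    have hq : IsOpenQuotientMap (Quot.mk (BundleRel X φ)) :=
      ⟨Quot.mk_surjective, continuous_quot_mk, hmkEopen⟩
    refine (hq.prodMap IsOpenQuotientMap.id).continuous_comp_iff.mp ?_
    exact continuous_quot_mk.comp
      ((continuous_fst.comp continuous_fst).prodMk
        ((continuous_snd.comp continuous_fst).mul continuous_snd))
  · -- freeness
    intro e
    induction e using Quot.ind with
    | _ p =>
      intro g h
      obtain ⟨γ, hγ⟩ := (bundle_mk_eq_iff φ (a := (p.1, p.2 * g)) (b := p)).1 h
      have h1 : γ • p.1 = p.1 := congrArg Prod.fst hγ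
      have hγ1 := hΓfree γ p.1 h1
      subst hγ1
      have h2 : φ 1 * (p.2 * g) = p.2 := congrArg Prod.snd hγ
      rw [map_one, one_mul] at h2
      exact mul_left_cancel (h2.trans (mul_one p.2).symm)
  · -- continuity of the projection
    exact continuous_quot_lift _ (continuous_quot_mk.comp continuous_fst)
  · -- local triviality
    intro y
    induction y using Quot.ind with
    | _ x₀ =>
    obtain ⟨U', hU'open, hx₀, hdisj⟩ := hΓpd x₀
    have huniq : ∀ (γ : Γ) (u : X), u ∈ U' → γ • u ∈ U' → γ = 1 := by
      intro γ u hu hγu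
      by_contra hne
      exact (hdisj γ hne).le_bot ⟨⟨u, hu, rfl⟩, hγu⟩ 
    have hmkYopen : IsOpenMap (Quot.mk (fun a b : X => ∃ γ : Γ, γ • a = b)) :=
      isOpenMap_quot_mk_action (fun γ (x : X) => γ • x) hΓcont (fun a => one_smul Γ a)
        (fun γ δ a => (mul_smul γ δ a).symm)
    set U : Set (GammaQuot X Γ) := Quot.mk _ '' U' with hU
    have hUopen : IsOpen U := hmkYopen U' hU'open
    have hmemU : ∀ u : U', Quot.mk (fun a b : X => ∃ γ : Γ, γ • a = b) (u : X) ∈ U :=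
      fun u => ⟨u, u.2, rfl⟩
    let e0 : U' → U := fun u => ⟨Quot.mk _ (u : X), hmemU u⟩
    have he0bij : Function.Bijective e0 := by
      constructor
      · rintro ⟨u, hu⟩ ⟨v, hv⟩ h
        obtain ⟨γ, hγ⟩ := gamma_mk_eq_iff.1 (congrArg Subtype.val h)
        have hv' : γ • u ∈ U' := by rw [hγ]; exact hv
        have hγ1 := huniq γ u hu hv'
        subst hγ1
        rw [one_smul] at hγ
        exact Subtype.ext hγ
      · rintro ⟨yv, hyv⟩
        obtain ⟨u, hu, rfl⟩ := hyv
        exact ⟨⟨u, hu⟩, rfl⟩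
    have he0cont : Continuous e0 :=
      Continuous.subtype_mk (continuous_quot_mk.comp continuous_subtype_val) _
    have he0open : IsOpenMap e0 := by
      have h1 : IsOpenMap (fun u : U' => Quot.mk (fun a b : X => ∃ γ : Γ, γ • a = b) (u : X)) :=
        hmkYopen.comp hU'open.isOpenMap_subtype_val
      exact isOpenMap_codRestrict' h1 hmemU
    let eU : U' ≃ₜ U :=
      Equiv.toHomeomorphOfContinuousOpen (Equiv.ofBijective e0 he0bij) he0cont he0open
    set s : U → X := fun yu => (eU.symm yu : X) with hs
    have hs_mem : ∀ yu, s yu ∈ U' := fun yu => (eU.symm yu).2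
    have hs_mk : ∀ yu : U, Quot.mk (fun a b : X => ∃ γ : Γ, γ • a = b) (s yu)
        = (yu : GammaQuot X Γ) := fun yu => congrArg Subtype.val (eU.apply_symm_apply yu)
    have hmem : ∀ p : U × G,
        Quot.mk (BundleRel X φ) (s p.1, p.2) ∈ BundleProj X φ ⁻¹' U := by
      intro p
      show Quot.mk (fun a b : X => ∃ γ : Γ, γ • a = b) (s p.1) ∈ U
      rw [hs_mk]
      exact p.1.2
    let F : U × G → (BundleProj X φ ⁻¹' U : Set (BundleTotal X φ)) :=
      fun p => ⟨Quot.mk _ (s p.1, p.2), hmem p⟩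
    have hFbij : Function.Bijective F := by
      constructor
      · rintro ⟨yu₁, g₁⟩ ⟨yu₂, g₂⟩ h
        obtain ⟨γ, hγ⟩ := (bundle_mk_eq_iff φ).1 (congrArg Subtype.val h)
        have h1 : γ • s yu₁ = s yu₂ := congrArg Prod.fst hγ
        have hγ1 := huniq γ (s yu₁) (hs_mem yu₁) (by rw [h1]; exact hs_mem yu₂)
        subst hγ1
        rw [one_smul] at h1
        have h2 : φ 1 * g₁ = g₂ := congrArg Prod.snd hγ
        rw [map_one, one_mul] at h2
        have hyu : yu₁ = yu₂ := by
          apply Subtype.ext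
          rw [← hs_mk yu₁, ← hs_mk yu₂, h1]
        rw [hyu, h2]
      · rintro ⟨e, he⟩
        obtain ⟨⟨z, g⟩, rfl⟩ := Quot.exists_rep e
        have hz : Quot.mk (fun a b : X => ∃ γ : Γ, γ • a = b) z ∈ U := he
        set yu : U := ⟨Quot.mk _ z, hz⟩ with hyu
        obtain ⟨γ, hγ⟩ := gamma_mk_eq_iff.1 (hs_mk yu)
        refine ⟨(yu, (φ γ)⁻¹ * g), ?_⟩
        apply Subtype.ext
        show Quot.mk (BundleRel X φ) (s yu, (φ γ)⁻¹ * g) = Quot.mk (BundleRel X φ) (z, g)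
        exact Quot.sound ⟨γ, by rw [hγ, mul_inv_cancel_left]⟩
    have hFcont : Continuous F := by
      apply Continuous.subtype_mk
      exact continuous_quot_mk.comp
        ((continuous_subtype_val.comp (eU.symm.continuous.comp continuous_fst)).prodMk
          continuous_snd)
    have hFopen : IsOpenMap F := by
      apply isOpenMap_codRestrict'
      have h1 : IsOpenMap (fun yu : U => s yu) :=
        hU'open.isOpenMap_subtype_val.comp eU.symm.isOpenMap
      exact hmkEopen.comp (h1.prodMap IsOpenMap.id)
    let Fh : U × G ≃ₜ (BundleProj X φ ⁻¹' U : Set (BundleTotal X φ)) :=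
      Equiv.toHomeomorphOfContinuousOpen (Equiv.ofBijective F hFbij) hFcont hFopen
    refine ⟨U, hUopen, ⟨x₀, hx₀, rfl⟩, Fh.symm, ?_⟩
    intro a b g hab
    set q := Fh.symm a with hq
    have ha : (a : BundleTotal X φ) = Quot.mk (BundleRel X φ) (s q.1, q.2) :=
      congrArg Subtype.val (Fh.apply_symm_apply a).symm
    have hb : b = Fh (q.1, q.2 * g) := by
      apply Subtype.ext
      rw [hab, ha]
      rfl
    rw [hb, Fh.symm_apply_apply]
end

section
/- Let X be a connected, simply connected, Hausdorff, locally path-connected topological space, let Γ be a discrete group acting on X freely and properly discontinuously, let G be a compact Hausdorff group, and let φ : Γ → G be a group homomorphism such that the composite Γ → G → π₀(G) = G/G_a is injective. Then the principal G-bundle E = Γ\(X × G) over Y = Γ\X is incompressible: for every loop α : S¹ → Y that is not nullhomotopic, the pullback of E along α is a non-trivial principal G-bundle over S¹. -/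
open Topology


/-- If `x` and `y` are joined by a path, so are their images under a continuous map. -/
theorem Joined.map' {X Y : Type*} [TopologicalSpace X] [TopologicalSpace Y] {x y : X}
    (h : Joined x y) {f : X → Y} (hf : Continuous f) : Joined (f x) (f y) :=
  ⟨h.somePath.map hf⟩

/-- `G_a`: the (not necessarily closed) normal subgroup of a topological group `G`
consisting of the elements that are path-connected to the identity. -/
def pathComponentSubgroup (G : Type*) [Group G] [TopologicalSpace G] [IsTopologicalGroup G] :
    Subgroup G where
  carrier := pathComponent (1 : G)
  one_mem' := mem_pathComponent_self 1
  mul_mem' := by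
    intro a b ha hb
    have h1 : Joined (1 : G) (a * b) :=
      hb.trans (by simpa using (Joined.map' ha (continuous_mul_right b)))
    exact h1
  inv_mem' := by
    intro a ha
    have h := Joined.map' ha continuous_inv
    simp only [inv_one] at h
    exact h

instance pathComponentSubgroup.normal (G : Type*) [Group G] [TopologicalSpace G]
    [IsTopologicalGroup G] : (pathComponentSubgroup G).Normal where
  conj_mem a ha g := by
    have : Continuous fun x : G => g * x * g⁻¹ :=
      (continuous_mul_right g⁻¹).comp (continuous_mul_left g)
    have h := Joined.map' ha this
    simp only [mul_one, mul_inv_cancel] at h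
    exact h

section IncompAux

open unitInterval Set

variable {X : Type*} {Γ : Type*} [Group Γ] [MulAction Γ X] {G : Type*} [Group G] (φ : Γ →* G)

/-- The diagonal `Γ`-action on `X × G`. -/
def bAct (γ : Γ) (w : X × G) : X × G := (γ • w.1, φ γ * w.2)

lemma bAct_one (w : X × G) : bAct φ 1 w = w := by simp [bAct]

lemma bAct_mul (γ γ' : Γ) (w : X × G) : bAct φ γ (bAct φ γ' w) = bAct φ (γ * γ') w := by
  simp [bAct, mul_smul, map_mul, mul_assoc]

lemma bundleRel_equivalence_s6 : Equivalence (BundleRel X φ) where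
  refl a := ⟨1, by simp⟩
  symm := by
    rintro a b ⟨γ, rfl⟩
    exact ⟨γ⁻¹, by simp⟩
  trans := by
    rintro a b c ⟨γ, rfl⟩ ⟨γ', rfl⟩
    exact ⟨γ' * γ, by simp [mul_smul, map_mul, mul_assoc]⟩

/-- The quotient map `X × G → E`. -/
def pmk : X × G → BundleTotal X φ := Quot.mk _

lemma pmk_bAct (γ : Γ) (w : X × G) : pmk φ (bAct φ γ w) = pmk φ w :=
  (Quot.sound ⟨γ, rfl⟩).symm

lemma rel_of_pmk_eq {a b : X × G} (h : pmk φ a = pmk φ b) : ∃ γ : Γ, bAct φ γ a = b :=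
  ((bundleRel_equivalence_s6 φ).eqvGen_iff).mp (Quot.eqvGen_exact h)

variable [TopologicalSpace X] [TopologicalSpace G] [IsTopologicalGroup G]

lemma continuous_bAct (hΓcont : ∀ γ : Γ, Continuous fun x : X => γ • x) (γ : Γ) :
    Continuous (bAct (X := X) φ γ) :=
  (((hΓcont γ).comp continuous_fst).prodMk ((continuous_mul_left (φ γ)).comp continuous_snd) :)

lemma isOpenMap_pmk (hΓcont : ∀ γ : Γ, Continuous fun x : X => γ • x) :
    IsOpenMap (pmk (X := X) φ) := by
  intro S hS
  have h2 : pmk φ ⁻¹' (pmk φ '' S) = ⋃ γ : Γ, bAct φ γ⁻¹ ⁻¹' S := by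
    ext w
    simp only [mem_preimage, mem_image, mem_iUnion]
    constructor
    · rintro ⟨u, huS, hu⟩
      obtain ⟨γ, rfl⟩ := rel_of_pmk_eq φ hu
      refine ⟨γ, ?_⟩
      rwa [bAct_mul, inv_mul_cancel, bAct_one]
    · rintro ⟨γ, hw⟩
      refine ⟨bAct φ γ⁻¹ w, hw, ?_⟩
      rw [pmk_bAct]
  have hopen : IsOpen (pmk φ ⁻¹' (pmk φ '' S)) := by
    rw [h2]
    exact isOpen_iUnion fun γ => hS.preimage (continuous_bAct φ hΓcont γ⁻¹)
  exact (isQuotientMap_quot_mk.isOpen_preimage).mp hopen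

/-- Local sheets for the covering `X × G → E`. -/
lemma exists_sheet (hΓcont : ∀ γ : Γ, Continuous fun x : X => γ • x)
    (hΓpd : ∀ x : X, ∃ U : Set X, IsOpen U ∧ x ∈ U ∧
      ∀ γ : Γ, γ ≠ 1 → Disjoint ((fun y : X => γ • y) '' U) U)
    (e : BundleTotal X φ) :
    ∃ (V : Set (BundleTotal X φ)) (sec : BundleTotal X φ → X × G),
      IsOpen V ∧ e ∈ V ∧ ContinuousOn sec V ∧ (∀ v ∈ V, pmk φ (sec v) = v) ∧
      (∀ u : X × G, pmk φ u ∈ V → ∃ γ : Γ, bAct φ γ (sec (pmk φ u)) = u) := by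
  obtain ⟨w, rfl⟩ := Quot.exists_rep e
  haveI : Nonempty (X × G) := ⟨w⟩
  obtain ⟨U, hUopen, hxU, hdisj⟩ := hΓpd w.1
  set S : Set (X × G) := U ×ˢ (univ : Set G) with hS
  have hSopen : IsOpen S := hUopen.prod isOpen_univ
  have hwS : w ∈ S := ⟨hxU, trivial⟩
  have hinj : Set.InjOn (pmk φ) S := by
    rintro u ⟨hu1, -⟩ u' ⟨hu'1, -⟩ h
    obtain ⟨γ, hγ⟩ := rel_of_pmk_eq φ h
    have hγ1 : γ = 1 := by
      by_contra hne
      have hmem : γ • u.1 ∈ (fun y : X => γ • y) '' U := ⟨u.1, hu1, rfl⟩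
      have h1 : γ • u.1 = u'.1 := congrArg Prod.fst hγ
      exact Set.disjoint_left.mp (hdisj γ hne) hmem (h1 ▸ hu'1)
    rw [hγ1, bAct_one] at hγ
    exact hγ
  set V : Set (BundleTotal X φ) := pmk φ '' S with hV
  have hVopen : IsOpen V := isOpenMap_pmk φ hΓcont S hSopen
  set sec : BundleTotal X φ → X × G := Function.invFunOn (pmk φ) S with hsec
  have hsec : ∀ v ∈ V, sec v ∈ S ∧ pmk φ (sec v) = v := by
    rintro v ⟨u, huS, rfl⟩
    exact Function.invFunOn_pos ⟨u, huS, rfl⟩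
  refine ⟨V, sec, hVopen, ⟨w, hwS, rfl⟩, ?_, fun v hv => (hsec v hv).2, ?_⟩
  · rw [continuousOn_iff']
    intro W hWopen
    refine ⟨pmk φ '' (W ∩ S), isOpenMap_pmk φ hΓcont _ (hWopen.inter hSopen), ?_⟩
    ext v
    constructor
    · rintro ⟨hvW, hvV⟩
      obtain ⟨hsecS, hsecp⟩ := hsec v hvV
      exact ⟨⟨sec v, ⟨hvW, hsecS⟩, hsecp⟩, hvV⟩
    · rintro ⟨⟨u, ⟨huW, huS⟩, rfl⟩, hvV⟩
      obtain ⟨hsecS, hsecp⟩ := hsec _ hvV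
      have : sec (pmk φ u) = u := hinj hsecS huS hsecp
      exact ⟨by rw [mem_preimage, this]; exact huW, hvV⟩
  · intro u hu
    obtain ⟨-, hsecp⟩ := hsec _ hu
    exact rel_of_pmk_eq φ hsecp

/-- Path lifting for the covering `X × G → E`: any path `β` in `E` is, up to
reparametrization, the projection of a path in `X × G`. -/
lemma lift_loop (hΓcont : ∀ γ : Γ, Continuous fun x : X => γ • x)
    (hΓpd : ∀ x : X, ∃ U : Set X, IsOpen U ∧ x ∈ U ∧
      ∀ γ : Γ, γ ≠ 1 → Disjoint ((fun y : X => γ • y) '' U) U)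
    (β : C(I, BundleTotal X φ)) :
    ∃ (a b : X × G) (π : Path a b) (r : Path (0 : I) (1 : I)),
      ∀ t : I, pmk φ (π t) = β (r t) := by
  choose V sec hVopen hVmem hseccont hsecsec hsecγ using exists_sheet φ hΓcont hΓpd
  obtain ⟨t, ht0, hmono, ⟨N, hN⟩, hseg⟩ :=
    exists_monotone_Icc_subset_open_cover_unitInterval
      (c := fun e : BundleTotal X φ => β ⁻¹' V e)
      (fun e => (hVopen e).preimage β.continuous)
      (fun s _ => Set.mem_iUnion.mpr ⟨β s, hVmem (β s)⟩)
  have key : ∀ n : ℕ, ∃ (a b : X × G) (π : Path a b) (r : Path (0 : I) (t n)),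
      ∀ s : I, pmk φ (π s) = β (r s) := by
    intro n
    induction n with
    | zero =>
      obtain ⟨w, hw⟩ := Quot.exists_rep (β 0)
      refine ⟨w, w, Path.refl w, (Path.refl (0 : I)).cast rfl ht0, fun s => ?_⟩
      simp only [Path.cast_coe, Path.refl_apply]
      exact hw
    | succ n ih =>
      obtain ⟨a, b, π, r, hlift⟩ := ih
      obtain ⟨e, hsub⟩ := hseg n
      have htn : t n ≤ t (n + 1) := hmono (Nat.le_succ n)
      -- the affine path from `t n` to `t (n+1)`
      have hmemI : ∀ s : I, ((1 - (s : ℝ)) * (t n : ℝ) + (s : ℝ) * (t (n + 1) : ℝ)) ∈ I := by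
        intro s
        have h1 := s.2.1; have h2 := s.2.2
        have h3 := (t n).2.1; have h4 := (t n).2.2
        have h5 := (t (n + 1)).2.1; have h6 := (t (n + 1)).2.2
        constructor <;> nlinarith
      set ℓfun : I → I := fun s => ⟨_, hmemI s⟩ with hℓfun
      have hℓcont : Continuous ℓfun :=
        Continuous.subtype_mk
          (((continuous_const.sub continuous_subtype_val).mul continuous_const).add
            (continuous_subtype_val.mul continuous_const)) _
      have hℓIcc : ∀ s : I, ℓfun s ∈ Set.Icc (t n) (t (n + 1)) := by
        intro s
        have h1 := s.2.1; have h2 := s.2.2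
        have htn' : (t n : ℝ) ≤ (t (n + 1) : ℝ) := htn
        constructor
        · show (t n : ℝ) ≤ (1 - (s : ℝ)) * (t n : ℝ) + (s : ℝ) * (t (n + 1) : ℝ)
          nlinarith
        · show ((1 - (s : ℝ)) * (t n : ℝ) + (s : ℝ) * (t (n + 1) : ℝ)) ≤ (t (n + 1) : ℝ)
          nlinarith
      set ℓ : Path (t n) (t (n + 1)) :=
        { toFun := ℓfun
          continuous_toFun := hℓcont
          source' := by
            apply Subtype.ext
            show (1 - (0 : ℝ)) * (t n : ℝ) + (0 : ℝ) * (t (n + 1) : ℝ) = (t n : ℝ)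
            ring
          target' := by
            apply Subtype.ext
            show (1 - (1 : ℝ)) * (t n : ℝ) + (1 : ℝ) * (t (n + 1) : ℝ) = (t (n + 1) : ℝ)
            ring } with hℓ
      have hVℓ : ∀ s : I, β (ℓ s) ∈ V e := fun s => hsub (hℓIcc s)
      have hb1 : pmk φ (π 1) = β (t n) := by
        have := hlift 1
        rwa [r.target] at this
      have hbV : pmk φ (π 1) ∈ V e := by
        rw [hb1]
        have : t n ∈ Set.Icc (t n) (t (n + 1)) := ⟨le_refl _, htn⟩
        exact hsub this
      obtain ⟨γ, hγ⟩ := hsecγ e (π 1) hbV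
      have hm0 : bAct φ γ (sec e (β (ℓ 0))) = b := by
        rw [ℓ.source, ← hb1, hγ, π.target]
      set m : Path b (bAct φ γ (sec e (β (ℓ 1)))) :=
        { toFun := fun s => bAct φ γ (sec e (β (ℓ s)))
          continuous_toFun := (continuous_bAct φ hΓcont γ).comp
            ((hseccont e).comp_continuous (β.continuous.comp ℓ.continuous) hVℓ)
          source' := hm0
          target' := rfl } with hm
      refine ⟨a, _, π.trans m, r.trans ℓ, fun s => ?_⟩
      rw [Path.trans_apply, Path.trans_apply]
      split_ifs with h
      · exact hlift _
      · show pmk φ (bAct φ γ (sec e (β (ℓ _)))) = β (ℓ _)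
        rw [pmk_bAct]
        exact hsecsec e _ (hVℓ _)
  obtain ⟨a, b, π, r, hlift⟩ := key N
  exact ⟨a, b, π, r.cast rfl (hN N le_rfl).symm, fun s => by
    rw [Path.cast_coe]; exact hlift s⟩

end IncompAux

section CircleAux

open Set unitInterval Real

/-- The standard parametrization `I → S¹`. -/
noncomputable def cI : C(I, Circle) :=
  Circle.exp.comp ⟨fun s : I => 2 * π * (s : ℝ), by fun_prop⟩

lemma cI_zero : cI 0 = 1 := by
  simp [cI, Circle.exp_zero]

lemma cI_one : cI 1 = 1 := by
  show Circle.exp (2 * π * 1) = 1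
  rw [mul_one, Circle.exp_two_pi]

lemma cI_surjective : Function.Surjective cI := by
  intro z
  have h2π : (0 : ℝ) < 2 * π := by positivity
  set θ := Complex.arg z with hθ
  refine ⟨⟨Int.fract (θ / (2 * π)), Int.fract_nonneg _, (Int.fract_lt_one _).le⟩, ?_⟩
  show Circle.exp (2 * π * Int.fract (θ / (2 * π))) = z
  have key : 2 * π * Int.fract (θ / (2 * π)) = θ + (-⌊θ / (2 * π)⌋ : ℤ) * (2 * π) := by
    rw [Int.fract]
    push_cast
    field_simp
    ring
  rw [key, Circle.exp_eq_exp.mpr ⟨-⌊θ / (2 * π)⌋, rfl⟩, hθ, Circle.exp_arg]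

lemma cI_semi_inj {s s' : I} (h : cI s = cI s') :
    s = s' ∨ (s = 0 ∧ s' = 1) ∨ (s = 1 ∧ s' = 0) := by
  have h2π : (0 : ℝ) < 2 * π := by positivity
  obtain ⟨m, hm⟩ := Circle.exp_eq_exp.mp h
  simp only [ContinuousMap.coe_mk] at hm
  have hm' : (s : ℝ) = (s' : ℝ) + m := by
    have h2 : 2 * π * (s : ℝ) = 2 * π * ((s' : ℝ) + m) := by rw [hm]; ring
    exact mul_left_cancel₀ (ne_of_gt h2π) h2
  have hs1 := s.2.1; have hs2 := s.2.2
  have hs1' := s'.2.1; have hs2' := s'.2.2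
  have hc0 : ((0 : I) : ℝ) = 0 := rfl
  have hc1 : ((1 : I) : ℝ) = 1 := rfl
  have hmi : m = 0 ∨ m = 1 ∨ m = -1 := by
    have h1 : (-1 : ℤ) ≤ m := by
      have : (-1 : ℝ) ≤ (m : ℝ) := by linarith
      exact_mod_cast this
    have h2 : m ≤ (1 : ℤ) := by
      have : (m : ℝ) ≤ 1 := by linarith
      exact_mod_cast this
    omega
  rcases hmi with rfl | rfl | rfl
  · left
    apply Subtype.ext
    push_cast at hm'
    linarith
  · right; right
    push_cast at hm'
    exact ⟨Subtype.ext (by rw [hc1]; linarith), Subtype.ext (by rw [hc0]; linarith)⟩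
  · right; left
    push_cast at hm'
    exact ⟨Subtype.ext (by rw [hc0]; linarith), Subtype.ext (by rw [hc1]; linarith)⟩

/-- Descent of a free nullhomotopy of the standard loop to the circle. -/
lemma nullhomotopic_of_loop_homotopy {Y : Type*} [TopologicalSpace Y] (α : C(Circle, Y)) (y : Y)
    (J : C(I × I, Y)) (h0 : ∀ s, J (0, s) = α (cI s)) (h1 : ∀ s, J (1, s) = y)
    (hloop : ∀ u, J (u, 0) = J (u, 1)) : α.Nullhomotopic := by
  have hwd : ∀ (u : I) {s s' : I}, cI s = cI s' → J (u, s) = J (u, s') := by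
    intro u s s' h
    rcases cI_semi_inj h with rfl | ⟨rfl, rfl⟩ | ⟨rfl, rfl⟩
    · rfl
    · exact hloop u
    · exact (hloop u).symm
  set pre : Circle → I := Function.surjInv cI_surjective with hpre
  have hpre' : ∀ z, cI (pre z) = z := Function.surjInv_eq cI_surjective
  set Q : I × I → I × Circle := fun w => (w.1, cI w.2) with hQ
  have hQcont : Continuous Q := continuous_fst.prodMk (cI.continuous.comp continuous_snd)
  have hQsurj : Function.Surjective Q := by
    rintro ⟨u, z⟩
    exact ⟨(u, pre z), by simp [hQ, hpre']⟩
  have hq : IsQuotientMap Q := (hQcont.isClosedMap).isQuotientMap hQcont hQsurj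
  set K : I × Circle → Y := fun w => J (w.1, pre w.2) with hK
  have hKQ : ∀ w : I × I, K (Q w) = J w := by
    rintro ⟨u, s⟩
    exact hwd u (hpre' (cI s))
  have hKcont : Continuous K := by
    rw [hq.continuous_iff]
    have : K ∘ Q = J := funext hKQ
    rw [this]
    exact J.continuous
  refine ⟨y, ⟨⟨⟨K, hKcont⟩, fun z => ?_, fun z => ?_⟩⟩⟩
  · show J (0, pre z) = α z
    rw [h0, hpre']
  · show J (1, pre z) = _
    rw [h1]; rfl

end CircleAux

/-- Let `X` be a connected, simply connected, Hausdorff, locally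
path-connected space, let a discrete group `Γ` act on `X` freely and properly
discontinuously (by homeomorphisms), let `G` be a compact Hausdorff topological group and
`φ : Γ → G` a homomorphism whose composition with `G → π₀(G) = G/G_a` is injective. Then
the principal `G`-bundle `E = Γ\(X × G)` over `Y = Γ\X` is incompressible: for every
non-nullhomotopic loop `α : S¹ → Y`, the pullback of `E` along `α` is a non-trivial
principal `G`-bundle over `S¹` (i.e. it admits no `G`-equivariant homeomorphism onto
`S¹ × G` commuting with the projections to `S¹`). -/
theorem bundleTotal_incompressible
    (X : Type*) [TopologicalSpace X] [ConnectedSpace X] [SimplyConnectedSpace X] [T2Space X]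
    [LocallyPathConnectedSpace X]
    (Γ : Type*) [Group Γ] [MulAction Γ X]
    (hΓcont : ∀ γ : Γ, Continuous fun x : X => γ • x)
    (hΓfree : ∀ (γ : Γ) (x : X), γ • x = x → γ = 1)
    (hΓpd : ∀ x : X, ∃ U : Set X, IsOpen U ∧ x ∈ U ∧
      ∀ γ : Γ, γ ≠ 1 → Disjoint ((fun y : X => γ • y) '' U) U)
    (G : Type*) [Group G] [TopologicalSpace G] [IsTopologicalGroup G] [CompactSpace G]
    [T2Space G] (φ : Γ →* G)
    (hφ : Function.Injective ((QuotientGroup.mk' (pathComponentSubgroup G)).comp φ)) :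
    ∀ α : C(Circle, GammaQuot X Γ), ¬ α.Nullhomotopic →
      ¬ ∃ Φ : {z : Circle × BundleTotal X φ // BundleProj X φ z.2 = α z.1} ≃ₜ Circle × G,
          (∀ z : {z : Circle × BundleTotal X φ // BundleProj X φ z.2 = α z.1},
            (Φ z).1 = (z : Circle × BundleTotal X φ).1) ∧
          ∀ (a b : {z : Circle × BundleTotal X φ // BundleProj X φ z.2 = α z.1}) (g : G),
            (b : Circle × BundleTotal X φ) =
                ((a : Circle × BundleTotal X φ).1,
                  BundleAct φ (a : Circle × BundleTotal X φ).2 g) →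
              Φ b = ((Φ a).1, (Φ a).2 * g) := by
  rintro α hα ⟨Φ, hfst, -⟩
  -- the trivialization gives a continuous section of the pullback, i.e. a lift of `α` to `E`
  set s : Circle → BundleTotal X φ := fun z => (Φ.symm (z, 1)).val.2 with hs
  have hs_cont : Continuous s := by
    have h1 : Continuous fun z : Circle => Φ.symm (z, 1) :=
      Φ.symm.continuous.comp (continuous_id.prodMk continuous_const)
    exact continuous_snd.comp (continuous_subtype_val.comp h1)
  have hs_proj : ∀ z, BundleProj X φ (s z) = α z := by
    intro z
    have h2 := (Φ.symm (z, 1)).2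
    have h3 : (Φ.symm (z, 1)).val.1 = z := by
      have := hfst (Φ.symm (z, 1))
      rw [Φ.apply_symm_apply] at this
      exact this.symm
    rw [hs]; rw [h2, h3]
  set β : C(unitInterval, BundleTotal X φ) := ⟨fun u => s (cI u), hs_cont.comp cI.continuous⟩ with hβ
  obtain ⟨a, b, π, r, hlift⟩ := lift_loop φ hΓcont hΓpd β
  -- the endpoints of the lift differ by some `γ : Γ`
  have h01 : pmk φ (π 0) = pmk φ (π 1) := by
    rw [hlift 0, hlift 1, r.source, r.target]
    show s (cI 0) = s (cI 1)
    rw [cI_zero, cI_one]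
  obtain ⟨γ, hγ⟩ := rel_of_pmk_eq φ h01
  rw [π.source, π.target] at hγ
  -- the `G`-component of the lift shows `φ γ ∈ G_a`
  have hjoined : Joined (1 : G) (φ γ) := by
    have j1 : Joined a.2 b.2 := ⟨π.map continuous_snd⟩
    have hb2 : b.2 = φ γ * a.2 := by rw [← hγ]; rfl
    rw [hb2] at j1
    have j2 := Joined.map' j1 (continuous_mul_right a.2⁻¹)
    simpa [mul_assoc] using j2
  -- hence `γ = 1` by injectivity into `π₀(G)`
  have hγ1 : γ = 1 := by
    apply hφ
    rw [map_one]
    show QuotientGroup.mk' (pathComponentSubgroup G) (φ γ) = 1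
    rw [QuotientGroup.mk'_apply, QuotientGroup.eq_one_iff]
    exact hjoined
  rw [hγ1, bAct_one] at hγ
  subst hγ
  -- so the `X`-component is a loop in the simply connected space `X`
  set xp : Path a.1 a.1 := π.map continuous_fst with hxp
  have hxq : ∀ u : unitInterval, (Quot.mk _ (xp u) : GammaQuot X Γ) = α (cI (r u)) := by
    intro u
    have h4 : BundleProj X φ (pmk φ (π u)) = Quot.mk _ (π u).1 := rfl
    have h5 : BundleProj X φ (β (r u)) = α (cI (r u)) := hs_proj _
    rw [← h5, ← hlift u, h4]; rfl
  obtain ⟨F⟩ := SimplyConnectedSpace.paths_homotopic xp (Path.refl a.1)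
  -- build the two-stage free nullhomotopy of `t ↦ α (cI t)`
  set L0 : C(unitInterval, GammaQuot X Γ) := α.comp cI with hL0
  set L1 : C(unitInterval, GammaQuot X Γ) := ⟨fun u => α (cI (r u)), by fun_prop⟩ with hL1
  set L2 : C(unitInterval, GammaQuot X Γ) :=
    ContinuousMap.const unitInterval (Quot.mk _ a.1 : GammaQuot X Γ) with hL2
  have hmemI : ∀ w : unitInterval × unitInterval, ((1 - (w.1 : ℝ)) * (w.2 : ℝ) + (w.1 : ℝ) * (r w.2 : ℝ)) ∈
      unitInterval := by
    intro w
    have h1 := w.1.2.1; have h2 := w.1.2.2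
    have h3 := w.2.2.1; have h4 := w.2.2.2
    have h5 := (r w.2).2.1; have h6 := (r w.2).2.2
    constructor <;> nlinarith
  set lin : unitInterval × unitInterval → unitInterval := fun w => ⟨_, hmemI w⟩ with hlin
  have hlincont : Continuous lin := by
    apply Continuous.subtype_mk
    have hr : Continuous fun w : unitInterval × unitInterval => (r w.2 : ℝ) :=
      continuous_subtype_val.comp (r.continuous.comp continuous_snd)
    fun_prop
  set H₁ : ContinuousMap.Homotopy L0 L1 :=
    { toFun := fun w => α (cI (lin w))
      continuous_toFun := α.continuous.comp (cI.continuous.comp hlincont)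
      map_zero_left := fun u => by
        show α (cI (lin (0, u))) = L0 u
        have : lin (0, u) = u := by
          apply Subtype.ext
          show (1 - (0 : ℝ)) * (u : ℝ) + (0 : ℝ) * (r u : ℝ) = (u : ℝ)
          ring
        rw [this]; rfl
      map_one_left := fun u => by
        show α (cI (lin (1, u))) = L1 u
        have : lin (1, u) = r u := by
          apply Subtype.ext
          show (1 - (1 : ℝ)) * (u : ℝ) + (1 : ℝ) * (r u : ℝ) = (r u : ℝ)
          ring
        rw [this]; rfl } with hH₁
  set H₂ : ContinuousMap.Homotopy L1 L2 :=
    { toFun := fun w => (Quot.mk _ (F w) : GammaQuot X Γ)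
      continuous_toFun := continuous_quot_mk.comp F.continuous
      map_zero_left := fun u => by
        show (Quot.mk _ (F (0, u)) : GammaQuot X Γ) = L1 u
        rw [F.apply_zero]
        exact hxq u
      map_one_left := fun u => by
        show (Quot.mk _ (F (1, u)) : GammaQuot X Γ) = L2 u
        rw [F.apply_one]
        rfl } with hH₂
  set T := H₁.trans H₂ with hT
  apply hα
  apply nullhomotopic_of_loop_homotopy α (Quot.mk _ a.1) T.toContinuousMap
  · intro u
    exact T.apply_zero u
  · intro u
    exact T.apply_one u
  · intro u
    have c0 : (((0 : unitInterval)) : ℝ) = 0 := rfl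
    have c1 : (((1 : unitInterval)) : ℝ) = 1 := rfl
    have hl0 : ∀ v : unitInterval × unitInterval, v.2 = 0 → lin v = 0 := by
      rintro ⟨v, x⟩ hx
      cases hx
      apply Subtype.ext
      show (1 - (v : ℝ)) * ((0 : unitInterval) : ℝ) + (v : ℝ) * ((r 0 : unitInterval) : ℝ) = _
      rw [r.source, c0]
      ring
    have hl1 : ∀ v : unitInterval × unitInterval, v.2 = 1 → lin v = 1 := by
      rintro ⟨v, x⟩ hx
      cases hx
      apply Subtype.ext
      show (1 - (v : ℝ)) * ((1 : unitInterval) : ℝ) + (v : ℝ) * ((r 1 : unitInterval) : ℝ) = _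
      rw [r.target, c1]
      ring
    have hF01 : ∀ v : unitInterval, F (v, 0) = F (v, 1) := by
      intro v
      rw [F.eq_fst v (Set.mem_insert _ _), F.eq_fst v (Set.mem_insert_of_mem _ rfl)]
      show xp 0 = xp 1
      rw [xp.source, xp.target]
    show T (u, 0) = T (u, 1)
    rw [hT, ContinuousMap.Homotopy.trans_apply, ContinuousMap.Homotopy.trans_apply]
    split_ifs with h
    · show α (cI (lin (_, 0))) = α (cI (lin (_, 1)))
      rw [hl0 _ rfl, hl1 _ rfl, cI_zero, cI_one]
    · show (Quot.mk _ (F (_, 0)) : GammaQuot X Γ) = Quot.mk _ (F (_, 1))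
      rw [hF01]
end

section
/- Let G be a locally compact Hausdorff group acting freely, properly and continuously on a locally compact Hausdorff space M, and let H be an open subgroup of G. Then every point p ∈ M has an open neighborhood V such that the set V.V = {g ∈ G : Vg ∩ V ≠ ∅} is contained in H. -/
/-- Let a locally compact Hausdorff group `G` act freely, properly and
continuously on a locally compact Hausdorff space `M` (on the right), and let `H` be an open
subgroup of `G`. Then every point `p ∈ M` has an open neighbourhood `V` such that
`V.V = {g ∈ G : Vg ∩ V ≠ ∅}` is contained in `H`. -/
theorem exists_nhd_transporter_subset_open_subgroup
    (G : Type*) [Group G] [TopologicalSpace G] [IsTopologicalGroup G] [LocallyCompactSpace G]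
    [T2Space G]
    (M : Type*) [TopologicalSpace M] [LocallyCompactSpace M] [T2Space M]
    (ρ : M → G → M) (hcont : Continuous fun p : M × G => ρ p.1 p.2)
    (hone : ∀ x, ρ x 1 = x) (hmul : ∀ x g h, ρ (ρ x g) h = ρ x (g * h))
    (hfree : ∀ x g, ρ x g = x → g = 1)
    (hproper : IsProperMap fun p : G × M => (ρ p.2 p.1, p.2))
    (H : Subgroup G) (hH : IsOpen (H : Set G)) (p : M) :
    ∃ V : Set M, IsOpen V ∧ p ∈ V ∧ {g : G | ∃ v ∈ V, ρ v g ∈ V} ⊆ (H : Set G) := by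
  obtain ⟨K, hKc, hKn⟩ := exists_compact_mem_nhds p
  set T : Set (G × M) := (fun q : G × M => (ρ q.2 q.1, q.2)) ⁻¹' (K ×ˢ K) with hT
  have hTc : IsCompact T := hproper.isCompact_preimage (hKc.prod hKc)
  set C : Set G := (Prod.fst '' T) \ (H : Set G) with hC
  have hCc : IsCompact C := (hTc.image continuous_fst).diff hH
  -- For each g in C, separate
  have claim : ∀ g ∈ C, ∃ (W : Set G) (Vg : Set M), IsOpen W ∧ g ∈ W ∧ IsOpen Vg ∧ p ∈ Vg ∧
      ∀ g' ∈ W, ∀ v ∈ Vg, ρ v g' ∉ Vg := by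
    intro g hg
    have hne : ρ p g ≠ p := by
      intro h
      exact hg.2 (by simpa using (hfree p g h ▸ H.one_mem : g ∈ H))
    obtain ⟨U₁, U₂, hU₁, hU₂, hm₁, hm₂, hdis⟩ := t2_separation hne
    have : (fun q : M × G => ρ q.1 q.2) ⁻¹' U₁ ∈ nhds (p, g) := by
      exact (hcont.continuousAt (x := (p, g))).preimage_mem_nhds (hU₁.mem_nhds hm₁)
    rw [mem_nhds_prod_iff] at this
    obtain ⟨V₀, hV₀, W, hW, hsub⟩ := this
    obtain ⟨V₀', hV₀'sub, hV₀'o, hpV₀'⟩ := mem_nhds_iff.mp hV₀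
    obtain ⟨W', hW'sub, hW'o, hgW'⟩ := mem_nhds_iff.mp hW
    refine ⟨W', V₀' ∩ U₂, hW'o, hgW', hV₀'o.inter hU₂, ⟨hpV₀', hm₂⟩, ?_⟩
    intro g' hg' v hv hmem
    have : ρ v g' ∈ U₁ := hsub (Set.mk_mem_prod (hV₀'sub hv.1) (hW'sub hg'))
    exact (Set.disjoint_left.mp hdis this) hmem.2
  choose W Vg hWo hgW hVo hpV hspec using claim
  obtain ⟨t, hcov⟩ := hCc.elim_nhds_subcover' (fun g hg => W g hg)
    (fun g hg => (hWo g hg).mem_nhds (hgW g hg))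
  refine ⟨interior K ∩ ⋂ x ∈ t, Vg x x.2, ?_, ?_, ?_⟩
  · exact isOpen_interior.inter (isOpen_biInter_finset fun x _ => hVo x x.2)
  · refine ⟨mem_interior_iff_mem_nhds.mpr hKn, Set.mem_iInter₂.mpr fun x _ => hpV x x.2⟩
  · rintro g ⟨v, hv, hvg⟩
    by_contra hgH
    have hgC : g ∈ C := by
      refine ⟨⟨(g, v), ?_, rfl⟩, hgH⟩
      exact Set.mk_mem_prod (interior_subset hvg.1) (interior_subset hv.1)
    obtain ⟨x, hxt, hgW'⟩ := Set.mem_iUnion₂.mp (hcov hgC)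
    exact hspec x x.2 g hgW' v (Set.mem_iInter₂.mp hv.2 x hxt)
      (Set.mem_iInter₂.mp hvg.2 x hxt)
end

section
/- Let G be a locally compact Hausdorff group acting freely, properly and continuously on a locally compact Hausdorff space M, and let H be an open subgroup of G. Then the canonical map M/H → M/G between the orbit spaces is a local homeomorphism. -/
/-- The orbit equivalence relation of a right action `ρ` of `G` on `X`. -/
def OrbitRel {X G : Type*} (ρ : X → G → X) : X → X → Prop := fun a b => ∃ g : G, ρ a g = b

/-- The orbit space `X/G` of a right action `ρ` of `G` on `X`, with the quotient topology. -/
def OrbitSpace {X G : Type*} (ρ : X → G → X) : Type _ := Quot (OrbitRel ρ)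

instance OrbitSpace.instTopologicalSpace {X G : Type*} [TopologicalSpace X] (ρ : X → G → X) :
    TopologicalSpace (OrbitSpace ρ) :=
  inferInstanceAs (TopologicalSpace (Quot _))
/-- The orbit relation of the restricted action of a subgroup `H ≤ G` on `X`. -/
def SubOrbitRel {X G : Type*} [Group G] (ρ : X → G → X) (H : Subgroup G) : X → X → Prop :=
  fun a b => ∃ h : H, ρ a (h : G) = b

/-- The orbit space `X/H` for the restricted action of a subgroup `H ≤ G`. -/
def SubOrbitSpace {X G : Type*} [Group G] (ρ : X → G → X) (H : Subgroup G) : Type _ :=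
  Quot (SubOrbitRel ρ H)

instance SubOrbitSpace.instTopologicalSpace {X G : Type*} [Group G] [TopologicalSpace X]
    (ρ : X → G → X) (H : Subgroup G) : TopologicalSpace (SubOrbitSpace ρ H) :=
  inferInstanceAs (TopologicalSpace (Quot _))

/-- The canonical map `X/H → X/G` sending the `H`-orbit of `x` to its `G`-orbit. -/
def subOrbitMap {X G : Type*} [Group G] (ρ : X → G → X) (H : Subgroup G) :
    SubOrbitSpace ρ H → OrbitSpace ρ :=
  Quot.lift (Quot.mk (OrbitRel ρ)) (by rintro a b ⟨h, rfl⟩; exact Quot.sound ⟨h, rfl⟩)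

/-- Let a locally compact Hausdorff group `G` act freely, properly and
continuously on a locally compact Hausdorff space `M` (on the right), and let `H` be an open
subgroup of `G`. Then the canonical map `M/H → M/G` between the orbit spaces is a local
homeomorphism. -/
theorem isLocalHomeomorph_subOrbitMap
    (G : Type*) [Group G] [TopologicalSpace G] [IsTopologicalGroup G] [LocallyCompactSpace G]
    [T2Space G]
    (M : Type*) [TopologicalSpace M] [LocallyCompactSpace M] [T2Space M]
    (ρ : M → G → M) (hcont : Continuous fun p : M × G => ρ p.1 p.2)
    (hone : ∀ x, ρ x 1 = x) (hmul : ∀ x g h, ρ (ρ x g) h = ρ x (g * h))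
    (hfree : ∀ x g, ρ x g = x → g = 1)
    (hproper : IsProperMap fun p : G × M => (ρ p.2 p.1, p.2))
    (H : Subgroup G) (hH : IsOpen (H : Set G)) :
    IsLocalHomeomorph (subOrbitMap ρ H) := by
  classical
  -- notation for the two quotient maps
  set qH : M → SubOrbitSpace ρ H := Quot.mk (SubOrbitRel ρ H) with hqH
  set qG : M → OrbitSpace ρ := Quot.mk (OrbitRel ρ) with hqG
  have hEquivG : Equivalence (OrbitRel ρ) := by
    constructor
    · exact fun x => ⟨1, hone x⟩
    · rintro x y ⟨g, rfl⟩
      exact ⟨g⁻¹, by rw [hmul, mul_inv_cancel, hone]⟩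
    · rintro x y z ⟨g, rfl⟩ ⟨g', rfl⟩
      exact ⟨g * g', (hmul _ _ _).symm⟩
  have hcg : ∀ g : G, Continuous fun x : M => ρ x g := fun g =>
    hcont.comp (continuous_id.prodMk continuous_const)
  -- equality of orbits
  have horbG : ∀ a b : M, qG a = qG b ↔ ∃ g : G, ρ a g = b := by
    intro a b
    constructor
    · intro h
      exact (hEquivG.eqvGen_iff).mp (Quot.eqvGen_exact h)
    · intro h; exact Quot.sound h
  have horbH : ∀ a b : M, qH a = qH b ↔ ∃ h : H, ρ a (h : G) = b := by
    intro a b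
    have hEquivH : Equivalence (SubOrbitRel ρ H) := by
      constructor
      · exact fun x => ⟨1, hone x⟩
      · rintro x y ⟨h, rfl⟩
        exact ⟨h⁻¹, by rw [hmul]; simp [hone]⟩
      · rintro x y z ⟨h, rfl⟩ ⟨h', rfl⟩
        exact ⟨h * h', (hmul _ _ _).symm⟩
    constructor
    · intro h
      exact (hEquivH.eqvGen_iff).mp (Quot.eqvGen_exact h)
    · intro h; exact Quot.sound h
  -- the quotient maps are open
  have hopenG : IsOpenMap qG := by
    intro W hW
    show IsOpen (qG ⁻¹' (qG '' W))
    have : qG ⁻¹' (qG '' W) = ⋃ g : G, (fun x => ρ x g) ⁻¹' W := by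
      ext m
      simp only [Set.mem_preimage, Set.mem_image, Set.mem_iUnion]
      constructor
      · rintro ⟨w, hw, hwm⟩
        obtain ⟨g, rfl⟩ := (horbG m w).mp hwm.symm
        exact ⟨g, hw⟩
      · rintro ⟨g, hg⟩
        exact ⟨ρ m g, hg, ((horbG m _).mpr ⟨g, rfl⟩).symm⟩
    rw [this]
    exact isOpen_iUnion fun g => (hcg g).isOpen_preimage _ hW
  have hopenH : IsOpenMap qH := by
    intro W hW
    show IsOpen (qH ⁻¹' (qH '' W))
    have : qH ⁻¹' (qH '' W) = ⋃ h : H, (fun x => ρ x (h : G)) ⁻¹' W := by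
      ext m
      simp only [Set.mem_preimage, Set.mem_image, Set.mem_iUnion]
      constructor
      · rintro ⟨w, hw, hwm⟩
        obtain ⟨h, rfl⟩ := (horbH m w).mp hwm.symm
        exact ⟨h, hw⟩
      · rintro ⟨h, hg⟩
        exact ⟨ρ m (h : G), hg, ((horbH m _).mpr ⟨h, rfl⟩).symm⟩
    rw [this]
    exact isOpen_iUnion fun h => (hcg (h : G)).isOpen_preimage _ hW
  -- the canonical map is continuous and open
  have hfcont : Continuous (subOrbitMap ρ H) :=
    continuous_quot_lift _ continuous_quot_mk
  have hcomp : ∀ m : M, subOrbitMap ρ H (qH m) = qG m := fun m => rfl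
  have hfopen : IsOpenMap (subOrbitMap ρ H) := by
    intro V hV
    have hsurj : Function.Surjective qH := Quot.mk_surjective
    have : subOrbitMap ρ H '' V = qG '' (qH ⁻¹' V) := by
      ext y
      simp only [Set.mem_image, Set.mem_preimage]
      constructor
      · rintro ⟨v, hv, rfl⟩
        obtain ⟨m, rfl⟩ := hsurj v
        exact ⟨m, hv, rfl⟩
      · rintro ⟨m, hm, rfl⟩
        exact ⟨qH m, hm, rfl⟩
    rw [this]
    exact hopenG _ (hV.preimage continuous_quot_mk)
  -- local injectivity via properness
  rw [isLocalHomeomorph_iff_isOpenEmbedding_restrict]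
  intro p
  obtain ⟨x, rfl⟩ : ∃ m, qH m = p := Quot.mk_surjective p
  -- find a good neighbourhood U of x
  have hC : IsClosed ((fun q : G × M => (ρ q.2 q.1, q.2)) '' ((↑H)ᶜ ×ˢ Set.univ)) :=
    hproper.isClosedMap _ ((hH.isClosed_compl).prod isClosed_univ)
  have hxx : (x, x) ∈ ((fun q : G × M => (ρ q.2 q.1, q.2)) '' ((↑H)ᶜ ×ˢ Set.univ))ᶜ := by
    rintro ⟨⟨g, m⟩, ⟨hg, -⟩, hgm⟩
    have h1 : ρ m g = x := congrArg Prod.fst hgm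
    have h2 : m = x := congrArg Prod.snd hgm
    subst h2
    exact hg (by rw [hfree _ _ h1]; exact H.one_mem)
  obtain ⟨U₁, U₂, hU₁, hU₂, hxU₁, hxU₂, hUsub⟩ :=
    isOpen_prod_iff.mp hC.isOpen_compl x x hxx
  set U := U₁ ∩ U₂ with hU
  have hUopen : IsOpen U := hU₁.inter hU₂
  have hxU : x ∈ U := ⟨hxU₁, hxU₂⟩
  have hkey : ∀ u ∈ U, ∀ g : G, ρ u g ∈ U → g ∈ H := by
    intro u hu g hgu
    by_contra hg
    exact hUsub (Set.mk_mem_prod hgu.1 hu.2)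
      ⟨(g, u), Set.mk_mem_prod hg (Set.mem_univ u), rfl⟩
  refine ⟨qH '' U, (hopenH U hUopen).mem_nhds ⟨x, hxU, rfl⟩, ?_⟩
  refine Topology.IsOpenEmbedding.of_continuous_injective_isOpenMap
    (hfcont.comp continuous_subtype_val) ?_ ?_
  · rintro ⟨a, ha⟩ ⟨b, hb⟩ hab
    obtain ⟨u, hu, rfl⟩ := ha
    obtain ⟨v, hv, rfl⟩ := hb
    simp only [Set.restrict_apply, hcomp] at hab
    obtain ⟨g, rfl⟩ := (horbG u v).mp hab
    have hgH : g ∈ H := hkey u hu g hv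
    exact Subtype.ext ((horbH u _).mpr ⟨⟨g, hgH⟩, rfl⟩)
  · intro s hs
    have : (qH '' U).restrict (subOrbitMap ρ H) '' s
        = subOrbitMap ρ H '' (Subtype.val '' s) := by
      rw [Set.image_image]; rfl
    change IsOpen ((qH '' U).restrict (subOrbitMap ρ H) '' s)
    rw [this]
    exact hfopen _ ((hopenH U hUopen).isOpenMap_subtype_val s hs)
end

section
/- Let H be a locally compact Hausdorff group acting freely, properly and continuously on a locally compact Hausdorff space X, and let N be a compact normal subgroup of H. Then the induced action of H on the orbit space X/N, given by [x]·h := [xh], is proper. -/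
/-- The induced right action of `H` on the orbit space `X/N`, `[x]·h := [xh]`, for a normal
subgroup `N` of `H`. -/
def quotActN {X H : Type*} [Group H] (ρ : X → H → X)
    (hmul : ∀ x g g', ρ (ρ x g) g' = ρ x (g * g')) (N : Subgroup H) [N.Normal]
    (q : Quot (SubOrbitRel ρ N)) (h : H) : Quot (SubOrbitRel ρ N) :=
  Quot.lift (fun x => Quot.mk (SubOrbitRel ρ N) (ρ x h))
    (by
      rintro a b ⟨n, rfl⟩
      apply Quot.sound
      refine ⟨⟨h⁻¹ * (n : H) * h, Subgroup.Normal.conj_mem' ‹N.Normal› _ n.2 h⟩, ?_⟩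
      show ρ (ρ a h) (h⁻¹ * (n : H) * h) = ρ (ρ a (n : H)) h
      rw [hmul, hmul]
      congr 1
      group) q

/-- Let a locally compact Hausdorff group `H` act freely, properly and
continuously on a locally compact Hausdorff space `X` (on the right), properness meaning
that for all compact `K, K' ⊆ X` the set `{h ∈ H : Kh ∩ K' ≠ ∅}` is compact. Then for every
compact normal subgroup `N` of `H`, the induced action `[x]·h := [xh]` of `H` on the orbit
space `X/N` is proper in the same sense. -/
theorem quotActN_proper
    (H : Type*) [Group H] [TopologicalSpace H] [IsTopologicalGroup H] [LocallyCompactSpace H]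
    [T2Space H]
    (X : Type*) [TopologicalSpace X] [LocallyCompactSpace X] [T2Space X]
    (ρ : X → H → X) (hcont : Continuous fun p : X × H => ρ p.1 p.2)
    (hone : ∀ x, ρ x 1 = x) (hmul : ∀ x g g', ρ (ρ x g) g' = ρ x (g * g'))
    (hfree : ∀ x g, ρ x g = x → g = 1)
    (hproper : ∀ K K' : Set X, IsCompact K → IsCompact K' →
      IsCompact {h : H | ∃ x ∈ K, ρ x h ∈ K'})
    (N : Subgroup H) [N.Normal] (hN : IsCompact (N : Set H)) :
    ∀ K K' : Set (SubOrbitSpace ρ N), IsCompact K → IsCompact K' →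
      IsCompact {h : H | ∃ q ∈ K, quotActN ρ hmul N q h ∈ K'} := by
  intro K K' hK hK'
  -- notation
  set r := SubOrbitRel ρ N with hr
  set π : X → SubOrbitSpace ρ N := Quot.mk r with hπ
  have hrequiv : Equivalence r := by
    constructor
    · exact fun x => ⟨1, hone x⟩
    · rintro x y ⟨n, rfl⟩
      exact ⟨n⁻¹, by rw [hmul]; simp [hone]⟩
    · rintro x y z ⟨n, rfl⟩ ⟨m, rfl⟩
      exact ⟨n * m, (hmul ..).symm⟩
  have hmk_eq : ∀ {x y : X}, π x = π y ↔ r x y := by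
    intro x y
    rw [hπ]; exact Quot.eq.trans hrequiv.eqvGen_iff
  have hcontn : ∀ n : H, Continuous (fun x => ρ x n) :=
    fun n => hcont.comp (continuous_id.prodMk continuous_const)
  have hπcont : Continuous π := continuous_quot_mk
  -- π is an open map
  have hπopen : IsOpenMap π := by
    intro U hU
    show IsOpen (Quot.mk r ⁻¹' (π '' U))
    have : Quot.mk r ⁻¹' (π '' U) = ⋃ n : N, (fun x => ρ x (n : H)) ⁻¹' U := by
      ext x
      simp only [Set.mem_preimage, Set.mem_image, Set.mem_iUnion]
      constructor
      · rintro ⟨u, hu, huxeq⟩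
        obtain ⟨n, hn⟩ := hmk_eq.mp huxeq.symm
        exact ⟨n, hn ▸ hu⟩
      · rintro ⟨n, hn⟩
        exact ⟨ρ x (n : H), hn, hmk_eq.mpr ⟨n⁻¹, by rw [hmul]; simp [hone]⟩⟩
    rw [this]
    exact isOpen_iUnion fun n => hU.preimage (hcontn _)
  -- the orbit relation is closed in X × X
  have hNcs : CompactSpace (N : Set H) := isCompact_iff_compactSpace.mp hN
  have hRclosed : IsClosed {p : X × X | r p.1 p.2} := by
    have hf : Continuous (fun p : X × (N : Set H) => (p.1, ρ p.1 (p.2 : H))) := by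
      refine continuous_fst.prodMk (hcont.comp (continuous_fst.prodMk ?_))
      exact continuous_subtype_val.comp continuous_snd
    have hprop : IsProperMap (fun p : X × (N : Set H) => (p.1, ρ p.1 (p.2 : H))) := by
      rw [isProperMap_iff_isCompact_preimage]
      refine ⟨hf, fun C hC => ?_⟩
      refine IsCompact.of_isClosed_subset ((hC.image continuous_fst).prod
        isCompact_univ) (hC.isClosed.preimage hf) ?_
      rintro ⟨x, n⟩ hx
      exact ⟨⟨(x, ρ x (n : H)), hx, rfl⟩, trivial⟩
    have : {p : X × X | r p.1 p.2} =
        Set.range (fun p : X × (N : Set H) => (p.1, ρ p.1 (p.2 : H))) := by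
      ext ⟨x, y⟩
      constructor
      · rintro ⟨n, hn⟩; exact ⟨(x, n), by simp [hn]⟩
      · rintro ⟨⟨x', n⟩, h⟩
        simp only [Prod.mk.injEq] at h
        obtain ⟨rfl, rfl⟩ := h
        exact ⟨n, rfl⟩
    rw [this]
    exact hprop.isClosedMap.isClosed_range
  -- the quotient is Hausdorff
  have hT2 : T2Space (SubOrbitSpace ρ N) := by
    constructor
    intro a b hab
    obtain ⟨x, rfl⟩ := Quot.exists_rep a
    obtain ⟨y, rfl⟩ := Quot.exists_rep b
    have hxy : (x, y) ∈ {p : X × X | r p.1 p.2}ᶜ := fun h => hab (hmk_eq.mpr h)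
    obtain ⟨U, V, hU, hV, hxU, hyV, hUV⟩ :=
      isOpen_prod_iff.mp hRclosed.isOpen_compl x y hxy
    refine ⟨π '' U, π '' V, hπopen U hU, hπopen V hV, ⟨x, hxU, rfl⟩, ⟨y, hyV, rfl⟩, ?_⟩
    rw [Set.disjoint_left]
    rintro q ⟨u, hu, rfl⟩ ⟨v, hv, hvq⟩
    exact hUV (Set.mk_mem_prod hu hv) (hmk_eq.mp hvq.symm)
  -- compact sets in the quotient lift to compact sets
  have hlift : ∀ C : Set (SubOrbitSpace ρ N), IsCompact C →
      IsCompact (π ⁻¹' C) := by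
    intro C hC
    -- choose a compact set L with C ⊆ π '' L
    have hchoice : ∀ q : SubOrbitSpace ρ N, ∃ L : Set X, IsCompact L ∧ π '' L ∈ nhds q := by
      intro q
      obtain ⟨x, rfl⟩ := Quot.exists_rep q
      obtain ⟨L, hLc, hLn⟩ := exists_compact_mem_nhds x
      refine ⟨L, hLc, ?_⟩
      have : π '' interior L ⊆ π '' L := Set.image_mono interior_subset
      exact Filter.mem_of_superset
        ((hπopen _ isOpen_interior).mem_nhds ⟨x, mem_interior_iff_mem_nhds.mpr hLn, rfl⟩) this
    choose L hLc hLn using hchoice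
    obtain ⟨t, -, ht⟩ := hC.elim_nhds_subcover (fun q => π '' L q) (fun q _ => hLn q)
    set Lt : Set X := ⋃ q ∈ t, L q with hLt
    have hLtc : IsCompact Lt := t.isCompact_biUnion fun q _ => hLc q
    -- saturation of Lt
    have hSatc : IsCompact ((fun p : X × (N : Set H) => ρ p.1 (p.2 : H)) '' (Lt ×ˢ Set.univ)) :=
      (hLtc.prod isCompact_univ).image
        (hcont.comp (continuous_fst.prodMk (continuous_subtype_val.comp continuous_snd)))
    have hCclosed : IsClosed C := hC.isClosed
    refine IsCompact.of_isClosed_subset hSatc (hCclosed.preimage hπcont) ?_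
    intro x hx
    obtain ⟨q, hqt, hq⟩ := Set.mem_iUnion₂.mp (ht hx)
    obtain ⟨l, hl, hlx⟩ := hq
    obtain ⟨n, rfl⟩ := hmk_eq.mp hlx
    exact ⟨(l, n), Set.mk_mem_prod (Set.mem_biUnion hqt hl) trivial, rfl⟩
  have hPK := hlift K hK
  have hPK' := hlift K' hK'
  have : {h : H | ∃ q ∈ K, quotActN ρ hmul N q h ∈ K'} =
      {h : H | ∃ x ∈ π ⁻¹' K, ρ x h ∈ π ⁻¹' K'} := by
    ext h
    simp only [Set.mem_setOf_eq, Set.mem_preimage]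
    constructor
    · rintro ⟨q, hq, hq'⟩
      obtain ⟨x, rfl⟩ := Quot.exists_rep q
      exact ⟨x, hq, hq'⟩
    · rintro ⟨x, hx, hx'⟩
      exact ⟨π x, hx, hx'⟩
  rw [this]
  exact hproper _ _ hPK hPK'
end
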